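/- Let k be a field of characteristic zero. For any x ∈ k with x¹² = 1, there exists a unique group homomorphism χ_x : SL₂(ℤ) → kˣ such that χ_x(𝔰) = x⁻³ and χ_x(𝔱) = x. Moreover, Γ(12) is contained in the kernel of χ_x. -/

import Mathlib

open Matrix

private def F3 (a b c d : ZMod 3) : ZMod 3 := a*c + b*d + c*d + 2*b*c^2*d

private def F4 (a b c d : ZMod 4) : ZMod 4 :=
  1 + 3*d + 2*c + b*d + b*c + b*c*d + b*c^2 + a*c

private lemma F3_hom : ∀ a b c d e f g h : ZMod 3, a*d - b*c = 1 → e*h - f*g = 1 →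
    F3 (a*e+b*g) (a*f+b*h) (c*e+d*g) (c*f+d*h) = F3 a b c d + F3 e f g h := by decide

set_option maxHeartbeats 4000000 in
private lemma F4_hom : ∀ a b c d e f g h : ZMod 4, a*d - b*c = 1 → e*h - f*g = 1 →
    F4 (a*e+b*g) (a*f+b*h) (c*e+d*g) (c*f+d*h) = F4 a b c d + F4 e f g h := by decide

private def expo (A : SpecialLinearGroup (Fin 2) ℤ) : ℕ :=
  4 * (F3 ((A.1 0 0 : ℤ) : ZMod 3) ((A.1 0 1 : ℤ) : ZMod 3)
        ((A.1 1 0 : ℤ) : ZMod 3) ((A.1 1 1 : ℤ) : ZMod 3)).val +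
  9 * (F4 ((A.1 0 0 : ℤ) : ZMod 4) ((A.1 0 1 : ℤ) : ZMod 4)
        ((A.1 1 0 : ℤ) : ZMod 4) ((A.1 1 1 : ℤ) : ZMod 4)).val

private lemma key_mod : ∀ (p q : ZMod 3) (r s : ZMod 4),
    (4 * (p+q).val + 9 * (r+s).val) % 12
      = ((4 * p.val + 9 * r.val) + (4 * q.val + 9 * s.val)) % 12 := by decide

private lemma det_entries (A : SpecialLinearGroup (Fin 2) ℤ) :
    A.1 0 0 * A.1 1 1 - A.1 0 1 * A.1 1 0 = 1 := by
  have h := A.2; rwa [Matrix.det_fin_two] at h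

private lemma coe_mul' (A B : SpecialLinearGroup (Fin 2) ℤ) : (A * B).1 = A.1 * B.1 := rfl

private lemma expo_mul (A B : SpecialLinearGroup (Fin 2) ℤ) :
    expo (A * B) % 12 = (expo A + expo B) % 12 := by
  have detA := det_entries A
  have detB := det_entries B
  have hm : ∀ i j, (A * B).1 i j = A.1 i 0 * B.1 0 j + A.1 i 1 * B.1 1 j := by
    intro i j
    rw [coe_mul', Matrix.mul_apply, Fin.sum_univ_two]
  have dA3 : ((A.1 0 0 : ℤ) : ZMod 3) * ((A.1 1 1 : ℤ) : ZMod 3)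
      - ((A.1 0 1 : ℤ) : ZMod 3) * ((A.1 1 0 : ℤ) : ZMod 3) = 1 := by
    have := congrArg (fun t : ℤ => (t : ZMod 3)) detA
    push_cast at this; exact this
  have dB3 : ((B.1 0 0 : ℤ) : ZMod 3) * ((B.1 1 1 : ℤ) : ZMod 3)
      - ((B.1 0 1 : ℤ) : ZMod 3) * ((B.1 1 0 : ℤ) : ZMod 3) = 1 := by
    have := congrArg (fun t : ℤ => (t : ZMod 3)) detB
    push_cast at this; exact this
  have dA4 : ((A.1 0 0 : ℤ) : ZMod 4) * ((A.1 1 1 : ℤ) : ZMod 4)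
      - ((A.1 0 1 : ℤ) : ZMod 4) * ((A.1 1 0 : ℤ) : ZMod 4) = 1 := by
    have := congrArg (fun t : ℤ => (t : ZMod 4)) detA
    push_cast at this; exact this
  have dB4 : ((B.1 0 0 : ℤ) : ZMod 4) * ((B.1 1 1 : ℤ) : ZMod 4)
      - ((B.1 0 1 : ℤ) : ZMod 4) * ((B.1 1 0 : ℤ) : ZMod 4) = 1 := by
    have := congrArg (fun t : ℤ => (t : ZMod 4)) detB
    push_cast at this; exact this
  have h3 : F3 ((( A * B).1 0 0 : ℤ) : ZMod 3) (((A * B).1 0 1 : ℤ) : ZMod 3)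
      (((A * B).1 1 0 : ℤ) : ZMod 3) (((A * B).1 1 1 : ℤ) : ZMod 3)
      = F3 ((A.1 0 0 : ℤ) : ZMod 3) ((A.1 0 1 : ℤ) : ZMod 3)
          ((A.1 1 0 : ℤ) : ZMod 3) ((A.1 1 1 : ℤ) : ZMod 3)
        + F3 ((B.1 0 0 : ℤ) : ZMod 3) ((B.1 0 1 : ℤ) : ZMod 3)
          ((B.1 1 0 : ℤ) : ZMod 3) ((B.1 1 1 : ℤ) : ZMod 3) := by
    simp only [hm]
    push_cast
    exact F3_hom _ _ _ _ _ _ _ _ dA3 dB3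
  have h4 : F4 (((A * B).1 0 0 : ℤ) : ZMod 4) (((A * B).1 0 1 : ℤ) : ZMod 4)
      (((A * B).1 1 0 : ℤ) : ZMod 4) (((A * B).1 1 1 : ℤ) : ZMod 4)
      = F4 ((A.1 0 0 : ℤ) : ZMod 4) ((A.1 0 1 : ℤ) : ZMod 4)
          ((A.1 1 0 : ℤ) : ZMod 4) ((A.1 1 1 : ℤ) : ZMod 4)
        + F4 ((B.1 0 0 : ℤ) : ZMod 4) ((B.1 0 1 : ℤ) : ZMod 4)
          ((B.1 1 0 : ℤ) : ZMod 4) ((B.1 1 1 : ℤ) : ZMod 4) := by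
    simp only [hm]
    push_cast
    exact F4_hom _ _ _ _ _ _ _ _ dA4 dB4
  unfold expo
  rw [h3, h4]
  exact key_mod _ _ _ _

private lemma pow_mod12 {G : Type*} [Group G] (u : G) (hu : u ^ 12 = 1) (m : ℕ) :
    u ^ m = u ^ (m % 12) := by
  conv_lhs => rw [← Nat.div_add_mod m 12]
  rw [pow_add, pow_mul, hu, one_pow, one_mul]

private abbrev Hst : Subgroup (SpecialLinearGroup (Fin 2) ℤ) :=
  Subgroup.closure {ModularGroup.S, ModularGroup.T}

private lemma S_mem : ModularGroup.S ∈ Hst :=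
  Subgroup.subset_closure (Set.mem_insert _ _)

private lemma T_mem : ModularGroup.T ∈ Hst :=
  Subgroup.subset_closure (Set.mem_insert_of_mem _ rfl)

private lemma mem_Hst : ∀ (n : ℕ) (A : SpecialLinearGroup (Fin 2) ℤ),
    (A.1 1 0).natAbs = n → A ∈ Hst := by
  intro n
  induction n using Nat.strong_induction_on with
  | _ n ih =>
  intro A hn
  have detA := det_entries A
  by_cases hc : A.1 1 0 = 0
  · rw [hc, mul_zero, sub_zero] at detA
    rcases Int.mul_eq_one_iff_eq_one_or_neg_one.mp detA with ⟨h1, h2⟩ | ⟨h1, h2⟩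
    · have hA : A = ModularGroup.T ^ (A.1 0 1) := by
        apply Subtype.ext
        rw [ModularGroup.coe_T_zpow]
        conv_lhs => rw [Matrix.eta_fin_two A.1]
        rw [h1, h2, hc]
      rw [hA]; exact zpow_mem T_mem _
    · have hA : A = ModularGroup.S ^ 2 * ModularGroup.T ^ (-(A.1 0 1)) := by
        apply Subtype.ext
        conv_lhs => rw [Matrix.eta_fin_two A.1]
        rw [h1, h2, hc, coe_mul', pow_two, coe_mul',
          ModularGroup.coe_S, ModularGroup.coe_T_zpow, Matrix.mul_fin_two,
          Matrix.mul_fin_two]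
        norm_num
      rw [hA]
      exact mul_mem (pow_mem S_mem 2) (zpow_mem T_mem _)
  · set a := A.1 0 0 with ha
    set c := A.1 1 0 with hcdef
    set q : ℤ := -(a / c) with hq
    set B := ModularGroup.S * (ModularGroup.T ^ q * A) with hB
    have hB10 : B.1 1 0 = a % c := by
      rw [hB, coe_mul', coe_mul',
        ModularGroup.coe_S, ModularGroup.coe_T_zpow]
      simp only [Matrix.mul_apply, Fin.sum_univ_two, Matrix.cons_val', Matrix.cons_val_zero,
        Matrix.cons_val_one, Matrix.head_cons, Matrix.head_fin_const, Matrix.empty_val',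
        Matrix.cons_val_fin_one, Matrix.of_apply]
      rw [Int.emod_def, hq]
      ring
    have hlt : (B.1 1 0).natAbs < n := by
      rw [hB10, ← hn]
      have h1 : 0 ≤ a % c := Int.emod_nonneg a hc
      have h2 : a % c < |c| := by
        rcases lt_or_gt_of_ne hc with h | h
        · rw [← Int.emod_neg]
          have hpos : 0 < -c := by omega
          calc a % (-c) < -c := Int.emod_lt_of_pos a hpos
            _ ≤ |c| := by rw [abs_of_neg h]
        · calc a % c < c := Int.emod_lt_of_pos a h
            _ ≤ |c| := le_abs_self c
      have habs : |c| = (c.natAbs : ℤ) := Int.abs_eq_natAbs c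
      omega
    have hBmem := ih _ hlt B rfl
    have hA : A = ModularGroup.T ^ (-q) * (ModularGroup.S⁻¹ * B) := by
      rw [hB]; group
    rw [hA]
    exact mul_mem (zpow_mem T_mem _) (mul_mem (inv_mem S_mem) hBmem)

private lemma closure_ST : Hst = ⊤ :=
  eq_top_iff.mpr fun A _ => mem_Hst _ A rfl

private lemma hom_eq {M : Type*} [Monoid M] (χ₁ χ₂ : SpecialLinearGroup (Fin 2) ℤ →* M)
    (hS : χ₁ ModularGroup.S = χ₂ ModularGroup.S)
    (hT : χ₁ ModularGroup.T = χ₂ ModularGroup.T) : χ₁ = χ₂ := by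
  refine MonoidHom.eq_of_eqOn_dense closure_ST ?_
  intro y hy
  rcases hy with rfl | hy
  · exact hS
  · rw [Set.mem_singleton_iff] at hy; subst hy; exact hT

/-- For `x ∈ k` with `x¹² = 1` there is a unique group homomorphism
`χ_x : SL₂(ℤ) → kˣ` with `χ_x(𝔰) = x⁻³` and `χ_x(𝔱) = x`; moreover `Γ(12)`, the kernel of
reduction mod 12, is contained in the kernel of `χ_x`. -/
theorem exists_unique_character_chi (k : Type) [Field k] [CharZero k]
    (x : k) (hx : x ^ 12 = 1) :
    (∃! χ : SpecialLinearGroup (Fin 2) ℤ →* kˣ,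
        (χ ModularGroup.S : k) = (x ^ 3)⁻¹ ∧ (χ ModularGroup.T : k) = x) ∧
    (∀ χ : SpecialLinearGroup (Fin 2) ℤ →* kˣ,
        (χ ModularGroup.S : k) = (x ^ 3)⁻¹ → (χ ModularGroup.T : k) = x →
        (SpecialLinearGroup.map (Int.castRingHom (ZMod 12))).ker ≤ χ.ker) := by
  have hx0 : x ≠ 0 := by
    rintro rfl
    norm_num at hx
  set u : kˣ := Units.mk0 x hx0 with hudef
  have hu12 : u ^ 12 = 1 := by
    ext
    push_cast [hudef]
    exact hx
  set χ₀ : SpecialLinearGroup (Fin 2) ℤ →* kˣ :=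
    MonoidHom.mk' (fun A => u ^ expo A) (fun A B => by
      show u ^ expo (A * B) = u ^ expo A * u ^ expo B
      rw [pow_mod12 u hu12 (expo (A * B)), expo_mul, ← pow_mod12 u hu12, pow_add]) with hχ₀
  have eS : expo ModularGroup.S = 9 := by
    simp only [expo, ModularGroup.coe_S]
    norm_num
    decide
  have eT : expo ModularGroup.T = 13 := by
    simp only [expo, ModularGroup.coe_T]
    norm_num
    decide
  have hSv : (χ₀ ModularGroup.S : k) = (x ^ 3)⁻¹ := by
    have h9 : (χ₀ ModularGroup.S : k) = x ^ 9 := by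
      rw [hχ₀]
      simp [eS, hudef]
    rw [h9]
    refine eq_inv_of_mul_eq_one_left ?_
    rw [← pow_add]
    exact hx
  have hTv : (χ₀ ModularGroup.T : k) = x := by
    have h13 : (χ₀ ModularGroup.T : k) = x ^ 13 := by
      rw [hχ₀]
      simp [eT, hudef]
    rw [h13, show (13 : ℕ) = 12 + 1 from rfl, pow_add, hx, one_mul, pow_one]
  have huniq : ∀ χ : SpecialLinearGroup (Fin 2) ℤ →* kˣ,
      (χ ModularGroup.S : k) = (x ^ 3)⁻¹ → (χ ModularGroup.T : k) = x → χ = χ₀ := by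
    intro χ h1 h2
    exact hom_eq χ χ₀ (Units.ext (h1.trans hSv.symm)) (Units.ext (h2.trans hTv.symm))
  have hker : (SpecialLinearGroup.map (Int.castRingHom (ZMod 12))).ker ≤ χ₀.ker := by
    intro A hA
    rw [MonoidHom.mem_ker] at hA ⊢
    have hent : ∀ i j, ((A.1 i j : ℤ) : ZMod 12)
        = (1 : Matrix (Fin 2) (Fin 2) (ZMod 12)) i j := by
      intro i j
      have h1 : (SpecialLinearGroup.map (Int.castRingHom (ZMod 12)) A).1 i j
          = (1 : SpecialLinearGroup (Fin 2) (ZMod 12)).1 i j := by rw [hA]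
      simpa [SpecialLinearGroup.coe_one] using h1
    have h00 : ((A.1 0 0 : ℤ) : ZMod 12) = 1 := by simpa [Matrix.one_apply] using hent 0 0
    have h01 : ((A.1 0 1 : ℤ) : ZMod 12) = 0 := by simpa [Matrix.one_apply] using hent 0 1
    have h10 : ((A.1 1 0 : ℤ) : ZMod 12) = 0 := by simpa [Matrix.one_apply] using hent 1 0
    have h11 : ((A.1 1 1 : ℤ) : ZMod 12) = 1 := by simpa [Matrix.one_apply] using hent 1 1
    have c3 : ∀ (m : ℤ) (v : ZMod 12), ((m : ZMod 12) = v) →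
        (m : ZMod 3) = ZMod.castHom (by norm_num : (3:ℕ) ∣ 12) (ZMod 3) v := by
      intro m v h
      rw [← h, map_intCast]
    have c4 : ∀ (m : ℤ) (v : ZMod 12), ((m : ZMod 12) = v) →
        (m : ZMod 4) = ZMod.castHom (by norm_num : (4:ℕ) ∣ 12) (ZMod 4) v := by
      intro m v h
      rw [← h, map_intCast]
    have e0 : expo A = 0 := by
      unfold expo
      rw [c3 _ _ h00, c3 _ _ h01, c3 _ _ h10, c3 _ _ h11,
        c4 _ _ h00, c4 _ _ h01, c4 _ _ h10, c4 _ _ h11]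
      norm_num
      decide
    rw [hχ₀]
    simp [e0]
  constructor
  · exact ⟨χ₀, ⟨hSv, hTv⟩, fun χ hχ => huniq χ hχ.1 hχ.2⟩
  · intro χ h1 h2
    rw [huniq χ h1 h2]
    exact hker
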